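/- arXiv:math/0503476 — 2 statements merged into one kernel-verified Lean document; each statement's English description precedes it below -/
import Mathlib

section
/- Let a, b > 0 with a + b = 1, and let u, v, w be nonnegative measurable functions on ℝⁿ such that u(x)^a · v(y)^b ≤ w(a·x + b·y) for all x, y ∈ ℝⁿ. Then (∫ u dx)^a · (∫ v dx)^b ≤ ∫ w dx. -/
open MeasureTheory
open Set Pointwise
open scoped ENNReal NNReal

lemma bm_compact (K L : Set ℝ) (hK : IsCompact K) (hKne : K.Nonempty)
    (hL : IsCompact L) (hLne : L.Nonempty) :
    volume K + volume L ≤ volume (K + L) := by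
  obtain ⟨x, hx⟩ := hK.exists_isGreatest hKne
  obtain ⟨y, hy⟩ := hL.exists_isLeast hLne
  have h1 : (fun k => k + y) '' K ⊆ K + L := fun z ⟨k, hk, hkz⟩ => ⟨k, hk, y, hy.1, hkz⟩
  have h2 : (fun l => x + l) '' L ⊆ K + L := fun z ⟨l, hl, hlz⟩ => ⟨x, hx.1, l, hl, hlz⟩
  have hint : ((fun k => k + y) '' K) ∩ ((fun l => x + l) '' L) ⊆ {x + y} := by
    rintro z ⟨⟨k, hk, rfl⟩, ⟨l, hl, hlz⟩⟩
    have h3 : k ≤ x := hx.2 hk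
    have h4 : y ≤ l := hy.2 hl
    simp only [mem_singleton_iff]
    simp only at hlz
    linarith
  have e1 : volume ((fun k => k + y) '' K) = volume K := by
    rw [show (fun k => k + y) '' K = (· + y) '' K from rfl, Set.image_add_right,
      measure_preimage_add_right]
  have e2 : volume ((fun l => x + l) '' L) = volume L := by
    rw [show (fun l => x + l) '' L = (x + ·) '' L from rfl, Set.image_add_left,
      measure_preimage_add]
  calc volume K + volume L
      = volume ((fun k => k + y) '' K) + volume ((fun l => x + l) '' L) := by rw [e1, e2]
    _ = volume (((fun k => k + y) '' K) ∪ ((fun l => x + l) '' L))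
        + volume (((fun k => k + y) '' K) ∩ ((fun l => x + l) '' L)) := by
        exact (measure_union_add_inter (μ := volume) _ ((hL.image (continuous_add_left x)).measurableSet)).symm
    _ ≤ volume (K + L) + 0 :=
        add_le_add (measure_mono (union_subset h1 h2))
          (le_trans (measure_mono hint) (by simp))
    _ = volume (K + L) := by simp

-- layer cake for functions bounded by 1
lemma layercake_le_one {f : ℝ → ℝ≥0∞} (hf : Measurable f) (hf1 : ∀ x, f x ≤ 1) :
    ∫⁻ x, f x = ∫⁻ t in Set.Ioo (0:ℝ) 1, volume {x | ENNReal.ofReal t < f x} := by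
  have hfin : ∀ x, f x ≠ ∞ := fun x => (lt_of_le_of_lt (hf1 x) ENNReal.one_lt_top).ne
  have h1 : ∫⁻ x, f x = ∫⁻ x, ENNReal.ofReal ((f x).toReal) := by
    refine lintegral_congr fun x => (ENNReal.ofReal_toReal (hfin x)).symm
  rw [h1, lintegral_eq_lintegral_meas_lt volume
    (Filter.Eventually.of_forall fun x => ENNReal.toReal_nonneg)
    (hf.ennreal_toReal.aemeasurable)]
  have hset : ∀ t : ℝ, 0 < t → {x | t < (f x).toReal} = {x | ENNReal.ofReal t < f x} := by
    intro t ht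
    ext x
    simp only [mem_setOf_eq]
    rw [ENNReal.ofReal_lt_iff_lt_toReal ht.le (hfin x)]
  have hIoi : Set.Ioo (0:ℝ) 1 ∪ Set.Ici (1:ℝ) = Set.Ioi 0 := Set.Ioo_union_Ici_eq_Ioi one_pos
  rw [← hIoi, lintegral_union measurableSet_Ici
    ((Set.Iio_disjoint_Ici le_rfl).mono_left Set.Ioo_subset_Iio_self)]
  have hzero : ∫⁻ t in Set.Ici (1:ℝ), volume {x | t < (f x).toReal} = 0 := by
    rw [setLIntegral_congr_fun measurableSet_Ici
      (fun t (ht : 1 ≤ t) => ?_), lintegral_zero]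
    have : {x | t < (f x).toReal} = ∅ := by
      ext x
      simp only [mem_setOf_eq, mem_empty_iff_false, iff_false, not_lt]
      calc (f x).toReal ≤ (1:ℝ≥0∞).toReal := ENNReal.toReal_mono ENNReal.one_ne_top (hf1 x)
        _ = 1 := ENNReal.toReal_one
        _ ≤ t := ht
    simp [this]
  rw [hzero, add_zero]
  refine setLIntegral_congr_fun measurableSet_Ioo
    (fun t ht => ?_)
  rw [hset t ht.1]

lemma meas_eq_iSup_compact_ne {S : Set ℝ} (hS : MeasurableSet S) {s₀ : ℝ} (hs₀ : s₀ ∈ S) :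
    volume S = ⨆ (K : {K : Set ℝ // IsCompact K ∧ K ⊆ S ∧ K.Nonempty}), volume K.1 := by
  refine le_antisymm ?_ (iSup_le fun K => measure_mono K.2.2.1)
  rw [hS.measure_eq_iSup_isCompact]
  refine iSup_le fun K => iSup_le fun hKS => iSup_le fun hK => ?_
  refine le_trans (measure_mono (subset_insert s₀ K)) ?_
  exact le_iSup (fun K : {K : Set ℝ // IsCompact K ∧ K ⊆ S ∧ K.Nonempty} => volume K.1)
    ⟨insert s₀ K, hK.insert s₀, insert_subset hs₀ hKS, ⟨s₀, mem_insert _ _⟩⟩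

lemma bm_superadd {a b : ℝ} (ha : 0 < a) (hb : 0 < b) {A B C : Set ℝ}
    (hA : MeasurableSet A) (hB : MeasurableSet B) (hAne : A.Nonempty) (hBne : B.Nonempty)
    (hsub : ∀ x ∈ A, ∀ y ∈ B, a * x + b * y ∈ C) :
    ENNReal.ofReal a * volume A + ENNReal.ofReal b * volume B ≤ volume C := by
  have key : ∀ K L : Set ℝ, IsCompact K → K ⊆ A → K.Nonempty → IsCompact L → L ⊆ B →
      L.Nonempty → ENNReal.ofReal a * volume K + ENNReal.ofReal b * volume L ≤ volume C := by
    intro K L hK hKA hKne hL hLB hLne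
    have hsm : a • K + b • L ⊆ C := by
      rintro z ⟨x, ⟨x0, hx0, rfl⟩, y, ⟨y0, hy0, rfl⟩, rfl⟩
      exact hsub x0 (hKA hx0) y0 (hLB hy0)
    have e1 : volume (a • K) = ENNReal.ofReal a * volume K := by
      rw [Measure.addHaar_smul]
      simp [abs_of_pos ha]
    have e2 : volume (b • L) = ENNReal.ofReal b * volume L := by
      rw [Measure.addHaar_smul]
      simp [abs_of_pos hb]
    calc ENNReal.ofReal a * volume K + ENNReal.ofReal b * volume L
        = volume (a • K) + volume (b • L) := by rw [e1, e2]
      _ ≤ volume (a • K + b • L) :=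
          bm_compact _ _ (hK.smul a) (hKne.smul_set) (hL.smul b) (hLne.smul_set)
      _ ≤ volume C := measure_mono hsm
  obtain ⟨x₀, hx₀⟩ := hAne
  obtain ⟨y₀, hy₀⟩ := hBne
  rw [meas_eq_iSup_compact_ne hA hx₀, meas_eq_iSup_compact_ne hB hy₀,
    ENNReal.mul_iSup, ENNReal.mul_iSup]
  have : Nonempty {K : Set ℝ // IsCompact K ∧ K ⊆ A ∧ K.Nonempty} :=
    ⟨⟨{x₀}, isCompact_singleton, singleton_subset_iff.mpr hx₀, ⟨x₀, rfl⟩⟩⟩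
  have : Nonempty {K : Set ℝ // IsCompact K ∧ K ⊆ B ∧ K.Nonempty} :=
    ⟨⟨{y₀}, isCompact_singleton, singleton_subset_iff.mpr hy₀, ⟨y₀, rfl⟩⟩⟩
  exact ENNReal.iSup_add_iSup_le fun K L =>
    key K.1 L.1 K.2.1 K.2.2.1 K.2.2.2 L.2.1 L.2.2.1 L.2.2.2

lemma oneDim_normalized {a b : ℝ} (ha : 0 < a) (hb : 0 < b) (hab : a + b = 1)
    {u v w : ℝ → ℝ≥0∞} (hum : Measurable u) (hvm : Measurable v) (hwm : Measurable w)
    (h : ∀ x y, u x ^ a * v y ^ b ≤ w (a * x + b * y))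
    (hsu : ∀ t : ℝ≥0∞, t < 1 → ∃ x, t < u x) (hsv : ∀ t : ℝ≥0∞, t < 1 → ∃ x, t < v x) :
    ENNReal.ofReal a * (∫⁻ x, min (u x) 1) + ENNReal.ofReal b * (∫⁻ x, min (v x) 1)
      ≤ ∫⁻ x, w x := by
  set F : ℝ → ℝ≥0∞ := fun t => volume {x | ENNReal.ofReal t < u x} with hF
  set G : ℝ → ℝ≥0∞ := fun t => volume {x | ENNReal.ofReal t < v x} with hG
  set H : ℝ → ℝ≥0∞ := fun t => volume {x | ENNReal.ofReal t < w x} with hH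
  have hFanti : Antitone F := fun t₁ t₂ h12 => measure_mono fun x hx =>
    lt_of_le_of_lt (ENNReal.ofReal_le_ofReal h12) hx
  have hGanti : Antitone G := fun t₁ t₂ h12 => measure_mono fun x hx =>
    lt_of_le_of_lt (ENNReal.ofReal_le_ofReal h12) hx
  have hHanti : Antitone H := fun t₁ t₂ h12 => measure_mono fun x hx =>
    lt_of_le_of_lt (ENNReal.ofReal_le_ofReal h12) hx
  -- pointwise superlevel inequality
  have key : ∀ t ∈ Set.Ioo (0:ℝ) 1,
      ENNReal.ofReal a * F t + ENNReal.ofReal b * G t ≤ H t := by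
    intro t ht
    have ht1 : ENNReal.ofReal t < 1 := by
      rw [← ENNReal.ofReal_one]
      exact ENNReal.ofReal_lt_ofReal_iff_of_nonneg ht.1.le |>.mpr ht.2
    have ht0 : 0 < ENNReal.ofReal t := ENNReal.ofReal_pos.mpr ht.1
    refine bm_superadd ha hb (measurableSet_lt measurable_const hum)
      (measurableSet_lt measurable_const hvm) (hsu _ ht1) (hsv _ ht1) ?_
    intro x hx y hy
    obtain ⟨c, hc1, hc2⟩ := exists_between (show ENNReal.ofReal t < u x from hx)
    obtain ⟨d, hd1, hd2⟩ := exists_between (show ENNReal.ofReal t < v y from hy)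
    set m := min c d with hm
    have hm0 : m ≠ 0 := (lt_min (ht0.trans hc1) (ht0.trans hd1)).ne'
    have hmtop : m ≠ ⊤ := ne_top_of_lt (lt_of_le_of_lt (min_le_left c d) hc2)
    have hum' : m ^ a ≤ u x ^ a :=
      ENNReal.rpow_le_rpow ((min_le_left c d).trans hc2.le) ha.le
    have hvm' : m ^ b ≤ v y ^ b :=
      ENNReal.rpow_le_rpow ((min_le_right c d).trans hd2.le) hb.le
    show ENNReal.ofReal t < w (a * x + b * y)
    calc ENNReal.ofReal t < m := lt_min hc1 hd1
      _ = m ^ (a + b) := by rw [hab, ENNReal.rpow_one]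
      _ = m ^ a * m ^ b := ENNReal.rpow_add a b hm0 hmtop
      _ ≤ u x ^ a * v y ^ b := mul_le_mul' hum' hvm'
      _ ≤ w (a * x + b * y) := h x y
  have hof1 : ∀ t : ℝ, t ∈ Set.Ioo (0:ℝ) 1 → ENNReal.ofReal t < 1 := by
    intro t ht
    rw [← ENNReal.ofReal_one]
    exact ENNReal.ofReal_lt_ofReal_iff_of_nonneg ht.1.le |>.mpr ht.2
  have hmin : ∀ (f : ℝ → ℝ≥0∞) (t : ℝ), ENNReal.ofReal t < 1 →
      {x | ENNReal.ofReal t < min (f x) 1} = {x | ENNReal.ofReal t < f x} := by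
    intro f t ht1
    ext x
    simp only [mem_setOf_eq, lt_min_iff, ht1, and_true]
  -- rewrite the truncated integrals via layer cake
  have hu' : ∫⁻ x, min (u x) 1 = ∫⁻ t in Set.Ioo (0:ℝ) 1, F t := by
    rw [layercake_le_one (hum.min measurable_const) (fun x => min_le_right _ _)]
    refine setLIntegral_congr_fun measurableSet_Ioo
      (fun t ht => ?_)
    rw [hmin u t (hof1 t ht)]
  have hv' : ∫⁻ x, min (v x) 1 = ∫⁻ t in Set.Ioo (0:ℝ) 1, G t := by
    rw [layercake_le_one (hvm.min measurable_const) (fun x => min_le_right _ _)]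
    refine setLIntegral_congr_fun measurableSet_Ioo
      (fun t ht => ?_)
    rw [hmin v t (hof1 t ht)]
  have hw' : ∫⁻ t in Set.Ioo (0:ℝ) 1, H t ≤ ∫⁻ x, w x := by
    have : ∫⁻ x, min (w x) 1 = ∫⁻ t in Set.Ioo (0:ℝ) 1, volume {x | ENNReal.ofReal t < min (w x) 1} :=
      layercake_le_one (hwm.min measurable_const) (fun x => min_le_right _ _)
    rw [show (∫⁻ t in Set.Ioo (0:ℝ) 1, H t) = ∫⁻ x, min (w x) 1 from ?_]
    · exact lintegral_mono fun x => min_le_left _ _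
    · rw [this]
      refine setLIntegral_congr_fun measurableSet_Ioo
        (fun t ht => ?_)
      rw [hmin w t (hof1 t ht)]
  rw [hu', hv', ← lintegral_const_mul _ hFanti.measurable,
    ← lintegral_const_mul _ hGanti.measurable, ← lintegral_add_left]
  · refine le_trans (setLIntegral_mono hHanti.measurable ?_) hw'
    exact fun t ht => key t ht
  · exact (hFanti.measurable.const_mul _)

-- weighted AM-GM in ℝ≥0∞
lemma engm {a b : ℝ} (ha : 0 < a) (hb : 0 < b) (hab : a + b = 1) (x y : ℝ≥0∞) :
    x ^ a * y ^ b ≤ ENNReal.ofReal a * x + ENNReal.ofReal b * y := by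
  have ha' : ENNReal.ofReal a ≠ 0 := (ENNReal.ofReal_pos.mpr ha).ne'
  have hb' : ENNReal.ofReal b ≠ 0 := (ENNReal.ofReal_pos.mpr hb).ne'
  rcases eq_or_ne x ⊤ with rfl | hx
  · rw [ENNReal.mul_top ha', top_add]; exact le_top
  rcases eq_or_ne y ⊤ with rfl | hy
  · rw [ENNReal.mul_top hb', add_top]; exact le_top
  lift x to ℝ≥0 using hx
  lift y to ℝ≥0 using hy
  have key := NNReal.geom_mean_le_arith_mean2_weighted (w₁ := a.toNNReal)
    (w₂ := b.toNNReal) (p₁ := x) (p₂ := y) ?_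
  · calc (↑x : ℝ≥0∞) ^ a * (↑y : ℝ≥0∞) ^ b
        = ↑(x ^ (a.toNNReal : ℝ) * y ^ (b.toNNReal : ℝ)) := by
          rw [ENNReal.coe_mul, ← ENNReal.coe_rpow_of_nonneg x ha.le,
            ← ENNReal.coe_rpow_of_nonneg y hb.le,
            Real.coe_toNNReal a ha.le, Real.coe_toNNReal b hb.le]
      _ ≤ ↑(a.toNNReal * x + b.toNNReal * y) := ENNReal.coe_le_coe.mpr key
      _ = ENNReal.ofReal a * ↑x + ENNReal.ofReal b * ↑y := by
          rw [ENNReal.coe_add, ENNReal.coe_mul, ENNReal.coe_mul,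
            ENNReal.ofReal, ENNReal.ofReal]
  · have : ((a.toNNReal + b.toNNReal : ℝ≥0) : ℝ) = ((1 : ℝ≥0) : ℝ) := by
      push_cast
      rw [Real.coe_toNNReal a ha.le, Real.coe_toNNReal b hb.le]
      exact hab
    exact_mod_cast this

lemma min_iSup_eq (x : ℝ≥0∞) (c : ℕ → ℝ≥0∞) :
    ⨆ k, min x (c k) = min x (⨆ k, c k) := by
  refine le_antisymm (iSup_le fun k => min_le_min le_rfl (le_iSup c k)) ?_
  by_cases hex : ∃ k, x ≤ c k
  · obtain ⟨k, hk⟩ := hex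
    calc min x (⨆ k, c k) ≤ x := min_le_left _ _
      _ = min x (c k) := (min_eq_left hk).symm
      _ ≤ ⨆ k, min x (c k) := le_iSup (fun k => min x (c k)) k
  · push_neg at hex
    have : ∀ k, min x (c k) = c k := fun k => min_eq_right (hex k).le
    simp_rw [this]
    exact min_le_right _ _

lemma oneDim {a b : ℝ} (ha : 0 < a) (hb : 0 < b) (hab : a + b = 1)
    {u v w : ℝ → ℝ≥0∞} (hum : Measurable u) (hvm : Measurable v) (hwm : Measurable w)
    (h : ∀ x y, u x ^ a * v y ^ b ≤ w (a * x + b * y)) :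
    (∫⁻ x, u x) ^ a * (∫⁻ x, v x) ^ b ≤ ∫⁻ x, w x := by
  by_cases hU : ∫⁻ x, u x = 0
  · rw [hU, ENNReal.zero_rpow_of_pos ha, zero_mul]; exact zero_le
  by_cases hV : ∫⁻ x, v x = 0
  · rw [hV, ENNReal.zero_rpow_of_pos hb, mul_zero]; exact zero_le
  have hSu : 0 < ⨆ x, u x := by
    rcases eq_or_ne (⨆ x, u x) 0 with h0 | h0
    · refine absurd ?_ hU
      have : u = fun _ => 0 := funext fun x => le_antisymm (h0 ▸ le_iSup u x) zero_le
      rw [this, lintegral_zero]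
    · exact h0.bot_lt
  have hSv : 0 < ⨆ x, v x := by
    rcases eq_or_ne (⨆ x, v x) 0 with h0 | h0
    · refine absurd ?_ hV
      have : v = fun _ => 0 := funext fun x => le_antisymm (h0 ▸ le_iSup v x) zero_le
      rw [this, lintegral_zero]
    · exact h0.bot_lt
  obtain ⟨c, hcmono, hcmem, hctend⟩ := exists_seq_strictMono_tendsto' hSu
  obtain ⟨d, hdmono, hdmem, hdtend⟩ := exists_seq_strictMono_tendsto' hSv
  have hcsup : ⨆ k, c k = ⨆ x, u x :=
    tendsto_nhds_unique (tendsto_atTop_iSup hcmono.monotone) hctend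
  have hdsup : ⨆ k, d k = ⨆ x, v x :=
    tendsto_nhds_unique (tendsto_atTop_iSup hdmono.monotone) hdtend
  set X : ℕ → ℝ≥0∞ := fun k => ∫⁻ x, min (u x) (c k) with hX
  set Y : ℕ → ℝ≥0∞ := fun k => ∫⁻ x, min (v x) (d k) with hY
  -- the key truncated inequality
  have key : ∀ k, X k ^ a * Y k ^ b ≤ ∫⁻ x, w x := by
    intro k
    have hck0 : c k ≠ 0 := (hcmem k).1.ne'
    have hcktop : c k ≠ ⊤ := ne_top_of_lt (hcmono (Nat.lt_succ_self k))
    have hdk0 : d k ≠ 0 := (hdmem k).1.ne'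
    have hdktop : d k ≠ ⊤ := ne_top_of_lt (hdmono (Nat.lt_succ_self k))
    set K : ℝ≥0∞ := c k ^ a * d k ^ b with hK
    have hK0 : K ≠ 0 := by
      simp only [hK, mul_ne_zero_iff]
      exact ⟨(ENNReal.rpow_pos (hcmem k).1 hcktop).ne', (ENNReal.rpow_pos (hdmem k).1 hdktop).ne'⟩
    have hKtop : K ≠ ⊤ := by
      simp only [hK]
      exact ENNReal.mul_ne_top (ENNReal.rpow_ne_top_of_nonneg ha.le hcktop)
        (ENNReal.rpow_ne_top_of_nonneg hb.le hdktop)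
    set u₁ : ℝ → ℝ≥0∞ := fun x => u x * (c k)⁻¹ with hu₁
    set v₁ : ℝ → ℝ≥0∞ := fun x => v x * (d k)⁻¹ with hv₁
    set w₁ : ℝ → ℝ≥0∞ := fun x => w x * K⁻¹ with hw₁
    have h₁ : ∀ x y, u₁ x ^ a * v₁ y ^ b ≤ w₁ (a * x + b * y) := by
      intro x y
      simp only [hu₁, hv₁, hw₁]
      rw [ENNReal.mul_rpow_of_nonneg _ _ ha.le, ENNReal.mul_rpow_of_nonneg _ _ hb.le,
        ENNReal.inv_rpow, ENNReal.inv_rpow, mul_mul_mul_comm,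
        ← ENNReal.mul_inv (Or.inl (ENNReal.rpow_pos (hcmem k).1 hcktop).ne')
          (Or.inl (ENNReal.rpow_ne_top_of_nonneg ha.le hcktop)), ← hK]
      exact mul_le_mul_left (h x y) K⁻¹
    have hsu₁ : ∀ t : ℝ≥0∞, t < 1 → ∃ x, t < u₁ x := by
      intro t ht
      obtain ⟨x, hx⟩ := lt_iSup_iff.mp (hcmem k).2
      refine ⟨x, lt_of_lt_of_le ht ?_⟩
      rw [hu₁]
      have : (1 : ℝ≥0∞) = c k * (c k)⁻¹ := (ENNReal.mul_inv_cancel hck0 hcktop).symm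
      rw [this]
      exact mul_le_mul_left hx.le _
    have hsv₁ : ∀ t : ℝ≥0∞, t < 1 → ∃ x, t < v₁ x := by
      intro t ht
      obtain ⟨x, hx⟩ := lt_iSup_iff.mp (hdmem k).2
      refine ⟨x, lt_of_lt_of_le ht ?_⟩
      rw [hv₁]
      have : (1 : ℝ≥0∞) = d k * (d k)⁻¹ := (ENNReal.mul_inv_cancel hdk0 hdktop).symm
      rw [this]
      exact mul_le_mul_left hx.le _
    have main := oneDim_normalized ha hb hab (hum.mul_const _) (hvm.mul_const _)
      (hwm.mul_const _) h₁ hsu₁ hsv₁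
    -- rewrite the integrals
    have hminmul : ∀ (f : ℝ → ℝ≥0∞) (e : ℝ≥0∞), e ≠ 0 → e ≠ ⊤ → ∀ x,
        min (f x * e⁻¹) 1 = min (f x) e * e⁻¹ := by
      intro f e he0 hetop x
      conv_lhs => rw [(ENNReal.mul_inv_cancel he0 hetop).symm]
      exact (Monotone.map_min (f := fun z : ℝ≥0∞ => z * e⁻¹)
        (fun _ _ hz => mul_le_mul_left hz _)).symm
    have hIu : ∫⁻ x, min (u₁ x) 1 = X k * (c k)⁻¹ := by
      simp only [hu₁]
      simp_rw [hminmul u (c k) hck0 hcktop]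
      rw [lintegral_mul_const _ (hum.min measurable_const)]
    have hIv : ∫⁻ x, min (v₁ x) 1 = Y k * (d k)⁻¹ := by
      simp only [hv₁]
      simp_rw [hminmul v (d k) hdk0 hdktop]
      rw [lintegral_mul_const _ (hvm.min measurable_const)]
    have hIw : ∫⁻ x, w₁ x = (∫⁻ x, w x) * K⁻¹ := by
      simp only [hw₁]
      rw [lintegral_mul_const _ hwm]
    rw [hIu, hIv, hIw] at main
    -- now put things together
    have hCa0 : c k ^ a ≠ 0 := (ENNReal.rpow_pos (hcmem k).1 hcktop).ne'
    have hCatop : c k ^ a ≠ ⊤ := ENNReal.rpow_ne_top_of_nonneg ha.le hcktop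
    have hDb0 : d k ^ b ≠ 0 := (ENNReal.rpow_pos (hdmem k).1 hdktop).ne'
    have hDbtop : d k ^ b ≠ ⊤ := ENNReal.rpow_ne_top_of_nonneg hb.le hdktop
    have e1 : X k ^ a = (X k * (c k)⁻¹) ^ a * c k ^ a := by
      rw [ENNReal.mul_rpow_of_nonneg _ _ ha.le, ENNReal.inv_rpow, mul_assoc,
        ENNReal.inv_mul_cancel hCa0 hCatop, mul_one]
    have e2 : Y k ^ b = (Y k * (d k)⁻¹) ^ b * d k ^ b := by
      rw [ENNReal.mul_rpow_of_nonneg _ _ hb.le, ENNReal.inv_rpow, mul_assoc,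
        ENNReal.inv_mul_cancel hDb0 hDbtop, mul_one]
    calc X k ^ a * Y k ^ b
        = ((X k * (c k)⁻¹) ^ a * (Y k * (d k)⁻¹) ^ b) * K := by
          rw [e1, e2, mul_mul_mul_comm, ← hK]
      _ ≤ (ENNReal.ofReal a * (X k * (c k)⁻¹) + ENNReal.ofReal b * (Y k * (d k)⁻¹)) * K :=
          mul_le_mul_left (engm ha hb hab _ _) K
      _ ≤ ((∫⁻ x, w x) * K⁻¹) * K := mul_le_mul_left main K
      _ = ∫⁻ x, w x := by
          rw [mul_assoc, ENNReal.inv_mul_cancel hK0 hKtop, mul_one]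
  -- pass to the limit
  have hXsup : ⨆ k, X k = ∫⁻ x, u x := by
    rw [hX, ← lintegral_iSup (fun k => hum.min measurable_const)
      (fun i j hij x => min_le_min le_rfl (hcmono.monotone hij))]
    refine lintegral_congr fun x => ?_
    rw [min_iSup_eq, hcsup, min_eq_left (le_iSup u x)]
  have hYsup : ⨆ k, Y k = ∫⁻ x, v x := by
    rw [hY, ← lintegral_iSup (fun k => hvm.min measurable_const)
      (fun i j hij x => min_le_min le_rfl (hdmono.monotone hij))]
    refine lintegral_congr fun x => ?_
    rw [min_iSup_eq, hdsup, min_eq_left (le_iSup v x)]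
  rw [← hXsup, ← hYsup]
  have ea : (⨆ k, X k) ^ a = ⨆ k, X k ^ a := by
    have h2 := OrderIso.map_iSup (ENNReal.orderIsoRpow a ha) X
    simp only [ENNReal.orderIsoRpow_apply] at h2
    exact h2
  have eb : (⨆ k, Y k) ^ b = ⨆ k, Y k ^ b := by
    have h2 := OrderIso.map_iSup (ENNReal.orderIsoRpow b hb) Y
    simp only [ENNReal.orderIsoRpow_apply] at h2
    exact h2
  rw [ea, eb, ENNReal.iSup_mul]
  refine iSup_le fun i => ?_
  rw [ENNReal.mul_iSup]
  refine iSup_le fun j => ?_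
  have hXm : X i ≤ X (max i j) := lintegral_mono fun x =>
    min_le_min le_rfl (hcmono.monotone (le_max_left i j))
  have hYm : Y j ≤ Y (max i j) := lintegral_mono fun x =>
    min_le_min le_rfl (hdmono.monotone (le_max_right i j))
  exact le_trans (mul_le_mul' (ENNReal.rpow_le_rpow hXm ha.le)
    (ENNReal.rpow_le_rpow hYm hb.le)) (key (max i j))

lemma PL_pi {a b : ℝ} (ha : 0 < a) (hb : 0 < b) (hab : a + b = 1) :
    ∀ n (u v w : (Fin n → ℝ) → ℝ≥0∞), Measurable u → Measurable v → Measurable w →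
      (∀ x y, u x ^ a * v y ^ b ≤ w (a • x + b • y)) →
      (∫⁻ x, u x) ^ a * (∫⁻ x, v x) ^ b ≤ ∫⁻ x, w x := by
  intro n
  induction n with
  | zero =>
    intro u v w hum hvm hwm h
    have huniv : (volume : Measure (Fin 0 → ℝ)) Set.univ = 1 := by
      rw [MeasureTheory.volume_pi, Measure.pi_univ]
      simp
    rw [lintegral_unique u, lintegral_unique v, lintegral_unique w, huniv,
      mul_one, mul_one, mul_one]
    have h0 := h default default
    convert h0 using 3 <;> first | exact congrArg _ (Subsingleton.elim _ _) | apply Subsingleton.elim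
  | succ n ih =>
    intro u v w hum hvm hwm h
    set e := MeasurableEquiv.piFinSuccAbove (fun _ : Fin (n + 1) => ℝ) 0 with he
    have hmp : MeasurePreserving e volume volume :=
      volume_preserving_piFinSuccAbove (fun _ : Fin (n + 1) => ℝ) 0
    set u' : ℝ × (Fin n → ℝ) → ℝ≥0∞ := fun p => u (e.symm p) with hu'
    set v' : ℝ × (Fin n → ℝ) → ℝ≥0∞ := fun p => v (e.symm p) with hv'
    set w' : ℝ × (Fin n → ℝ) → ℝ≥0∞ := fun p => w (e.symm p) with hw'
    have hu'm : Measurable u' := hum.comp e.symm.measurable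
    have hv'm : Measurable v' := hvm.comp e.symm.measurable
    have hw'm : Measurable w' := hwm.comp e.symm.measurable
    have hlin : ∀ p q : ℝ × (Fin n → ℝ),
        e.symm (a • p + b • q) = a • e.symm p + b • e.symm q := by
      intro p q
      simp only [he, MeasurableEquiv.piFinSuccAbove]
      ext j
      refine Fin.cases ?_ (fun i => ?_) j <;>
        simp [Fin.insertNthEquiv, Pi.add_apply, Pi.smul_apply]
    have h' : ∀ p q, u' p ^ a * v' q ^ b ≤ w' (a • p + b • q) := by
      intro p q
      simp only [hu', hv', hw', hlin p q]
      exact h _ _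
    -- marginals
    set U : ℝ → ℝ≥0∞ := fun x => ∫⁻ y, u' (x, y) with hU
    set V : ℝ → ℝ≥0∞ := fun x => ∫⁻ y, v' (x, y) with hV
    set W : ℝ → ℝ≥0∞ := fun x => ∫⁻ y, w' (x, y) with hW
    have hUm : Measurable U := hu'm.lintegral_prod_right'
    have hVm : Measurable V := hv'm.lintegral_prod_right'
    have hWm : Measurable W := hw'm.lintegral_prod_right'
    have hkey : ∀ x₀ y₀ : ℝ, U x₀ ^ a * V y₀ ^ b ≤ W (a * x₀ + b * y₀) := by
      intro x₀ y₀
      refine ih (fun z => u' (x₀, z)) (fun z => v' (y₀, z))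
        (fun z => w' (a * x₀ + b * y₀, z)) (hu'm.comp measurable_prodMk_left)
        (hv'm.comp measurable_prodMk_left) (hw'm.comp measurable_prodMk_left) ?_
      intro z z'
      have := h' (x₀, z) (y₀, z')
      rwa [show a • (x₀, z) + b • (y₀, z') = (a * x₀ + b * y₀, a • z + b • z') from rfl] at this
    have h1d := oneDim ha hb hab hUm hVm hWm hkey
    have trans : ∀ (f : (Fin (n+1) → ℝ) → ℝ≥0∞), Measurable f →
        ∫⁻ x, f x = ∫⁻ x, ∫⁻ y, f (e.symm (x, y)) := by
      intro f hf
      rw [← (MeasurePreserving.symm e hmp).lintegral_comp hf, Measure.volume_eq_prod]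
      exact lintegral_prod _ ((hf.comp e.symm.measurable).aemeasurable)
    rw [trans u hum, trans v hvm, trans w hwm]
    exact h1d

theorem prekopa_leindler (n : ℕ) (a b : ℝ) (ha : 0 < a) (hb : 0 < b) (hab : a + b = 1)
    (u v w : EuclideanSpace ℝ (Fin n) → ℝ)
    (hu0 : ∀ x, 0 ≤ u x) (hv0 : ∀ x, 0 ≤ v x) (hw0 : ∀ x, 0 ≤ w x)
    (hum : Measurable u) (hvm : Measurable v) (hwm : Measurable w)
    (h : ∀ x y, u x ^ a * v y ^ b ≤ w (a • x + b • y)) :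
    (∫⁻ x, ENNReal.ofReal (u x)) ^ a * (∫⁻ x, ENNReal.ofReal (v x)) ^ b
      ≤ ∫⁻ x, ENNReal.ofReal (w x) := by
  set e := (MeasurableEquiv.toLp 2 (Fin n → ℝ)).symm with he
  have hmp : MeasurePreserving e volume volume :=
    EuclideanSpace.volume_preserving_symm_measurableEquiv_toLp (Fin n)
  set u' : (Fin n → ℝ) → ℝ≥0∞ := fun p => ENNReal.ofReal (u (e.symm p)) with hu'
  set v' : (Fin n → ℝ) → ℝ≥0∞ := fun p => ENNReal.ofReal (v (e.symm p)) with hv'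
  set w' : (Fin n → ℝ) → ℝ≥0∞ := fun p => ENNReal.ofReal (w (e.symm p)) with hw'
  have hlin : ∀ p q : Fin n → ℝ, e.symm (a • p + b • q) = a • e.symm p + b • e.symm q := by
    intro p q
    rfl
  have h' : ∀ p q, u' p ^ a * v' q ^ b ≤ w' (a • p + b • q) := by
    intro p q
    simp only [hu', hv', hw', hlin p q]
    calc ENNReal.ofReal (u (e.symm p)) ^ a * ENNReal.ofReal (v (e.symm q)) ^ b
        = ENNReal.ofReal (u (e.symm p) ^ a * v (e.symm q) ^ b) := by
          rw [ENNReal.ofReal_mul (Real.rpow_nonneg (hu0 _) _),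
            ← ENNReal.ofReal_rpow_of_nonneg (hu0 _) ha.le,
            ← ENNReal.ofReal_rpow_of_nonneg (hv0 _) hb.le]
      _ ≤ ENNReal.ofReal (w (a • e.symm p + b • e.symm q)) :=
          ENNReal.ofReal_le_ofReal (h _ _)
  have key := PL_pi ha hb hab n u' v' w'
    ((ENNReal.measurable_ofReal.comp hum).comp e.symm.measurable)
    ((ENNReal.measurable_ofReal.comp hvm).comp e.symm.measurable)
    ((ENNReal.measurable_ofReal.comp hwm).comp e.symm.measurable) h'
  have trans : ∀ (f : EuclideanSpace ℝ (Fin n) → ℝ), Measurable f →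
      ∫⁻ p, ENNReal.ofReal (f (e.symm p)) = ∫⁻ x, ENNReal.ofReal (f x) := by
    intro f hf
    exact (MeasurePreserving.symm e hmp).lintegral_comp
      (ENNReal.measurable_ofReal.comp hf)
  rwa [hu', hv', hw', trans u hum, trans v hvm, trans w hwm] at key
end

section
/- Let μ and ν be probability measures with e^{-c} ≤ dν/dμ ≤ e^{c} for some c ≥ 0. Then for every nonnegative f, e^{-c} Ent_ν(f) ≤ Ent_μ(f) ≤ e^{c} Ent_ν(f). -/
open MeasureTheory

/-- The entropy of `f` with respect to `μ`. -/
noncomputable def Ent {α : Type*} [MeasurableSpace α] (μ : Measure α) (f : α → ℝ) : ℝ :=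
  ∫ x, f x * Real.log (f x / ∫ y, f y ∂μ) ∂μ

lemma phi_nonneg {x a : ℝ} (hx : 0 ≤ x) (ha : 0 < a) :
    0 ≤ x * Real.log (x / a) - x + a := by
  rcases hx.eq_or_lt with h | h
  · simp [← h]; linarith
  · have h1 : Real.log (a / x) ≤ a / x - 1 := Real.log_le_sub_one_of_pos (div_pos ha h)
    have h2 : Real.log (x / a) = - Real.log (a / x) := by
      rw [← Real.log_inv, inv_div]
    have h3 : x * (a / x - 1) = a - x := by field_simp
    nlinarith [mul_le_mul_of_nonneg_left h1 h.le]

lemma log_decomp {x a b : ℝ} (hx : 0 ≤ x) (ha : 0 < a) (hb : 0 < b) :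
    x * Real.log (x / a) = x * Real.log (x / b) + (Real.log b - Real.log a) * x := by
  rcases hx.eq_or_lt with h | h
  · simp [← h]
  · rw [Real.log_div h.ne' ha.ne', Real.log_div h.ne' hb.ne']; ring

lemma ent_aux {α : Type*} [MeasurableSpace α] (ρ : Measure α) [IsProbabilityMeasure ρ]
    (f : α → ℝ) (hf : ∀ x, 0 ≤ f x) (hfint : Integrable f ρ)
    (hint : Integrable (fun x => f x * Real.log (f x / ∫ y, f y ∂ρ)) ρ)
    (a : ℝ) (ha : 0 < a) (hm : 0 < ∫ y, f y ∂ρ) :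
    Integrable (fun x => f x * Real.log (f x / a) - f x + a) ρ ∧
    ∫ x, (f x * Real.log (f x / a) - f x + a) ∂ρ
      = Ent ρ f + ((∫ y, f y ∂ρ) * Real.log ((∫ y, f y ∂ρ) / a)
          - (∫ y, f y ∂ρ) + a) := by
  set m := ∫ y, f y ∂ρ with hmdef
  have hfun : (fun x => f x * Real.log (f x / a))
      = fun x => f x * Real.log (f x / m) + (Real.log m - Real.log a) * f x := by
    funext x; exact log_decomp (hf x) ha hm
  have hint1 : Integrable (fun x => f x * Real.log (f x / a)) ρ := by
    rw [hfun]; exact hint.add (hfint.const_mul _)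
  have hint2 : Integrable (fun x => f x * Real.log (f x / a) - f x + a) ρ :=
    (hint1.sub hfint).add (integrable_const a)
  refine ⟨hint2, ?_⟩
  have hsub : Integrable (fun x => f x * Real.log (f x / a) - f x) ρ := hint1.sub hfint
  rw [integral_add hsub (integrable_const a), integral_sub hint1 hfint,
    integral_const]
  simp only [measure_univ, probReal_univ, ENNReal.toReal_one, smul_eq_mul, one_mul]
  rw [hfun, integral_add hint (hfint.const_mul _), integral_const_mul _ _]
  have : Real.log m - Real.log a = Real.log (m / a) := (Real.log_div hm.ne' ha.ne').symm
  rw [this]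
  unfold Ent
  rw [← hmdef]
  ring

theorem entropy_comparison {α : Type*} [MeasurableSpace α] (μ ν : Measure α)
    [IsProbabilityMeasure μ] [IsProbabilityMeasure ν] (hac : ν ≪ μ)
    (c : ℝ) (hc : 0 ≤ c)
    (hd : ∀ᵐ x ∂μ, Real.exp (-c) ≤ (ν.rnDeriv μ x).toReal ∧
      (ν.rnDeriv μ x).toReal ≤ Real.exp c)
    (f : α → ℝ) (hf : ∀ x, 0 ≤ f x)
    (hfμ : Integrable f μ) (hfν : Integrable f ν)
    (hμint : Integrable (fun x => f x * Real.log (f x / ∫ y, f y ∂μ)) μ)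
    (hνint : Integrable (fun x => f x * Real.log (f x / ∫ y, f y ∂ν)) ν) :
    Real.exp (-c) * Ent ν f ≤ Ent μ f ∧ Ent μ f ≤ Real.exp c * Ent ν f := by
  set D : α → ℝ := fun x => (ν.rnDeriv μ x).toReal with hDdef
  set mμ : ℝ := ∫ y, f y ∂μ with hmμ
  set mν : ℝ := ∫ y, f y ∂ν with hmν
  have hmμ0 : 0 ≤ mμ := integral_nonneg hf
  by_cases hzero : mμ = 0
  · -- degenerate case: f = 0 a.e.
    have hf0 : f =ᵐ[μ] 0 := by
      have := (integral_eq_zero_iff_of_nonneg hf hfμ).mp hzero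
      exact this
    have hf0ν : f =ᵐ[ν] 0 := hac.ae_eq hf0
    have e1 : Ent μ f = 0 := by
      unfold Ent
      rw [integral_eq_zero_of_ae]
      filter_upwards [hf0] with x hx
      simp [hx]
    have e2 : Ent ν f = 0 := by
      unfold Ent
      rw [integral_eq_zero_of_ae]
      filter_upwards [hf0ν] with x hx
      simp [hx]
    rw [e1, e2]
    norm_num
  · have hmμpos : 0 < mμ := lt_of_le_of_ne hmμ0 (Ne.symm hzero)
    -- mν > 0
    have hDf_int : Integrable (fun x => D x • f x) μ :=
      (integrable_rnDeriv_smul_iff hac).mpr hfν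
    have hmν_eq : mν = ∫ x, D x • f x ∂μ := (integral_rnDeriv_smul hac).symm
    have hmνpos : 0 < mν := by
      have h1 : Real.exp (-c) * mμ ≤ mν := by
        rw [hmν_eq, ← integral_const_mul _ _]
        refine integral_mono_ae (hfμ.const_mul _) hDf_int ?_
        filter_upwards [hd] with x hx
        simp only [smul_eq_mul]
        exact mul_le_mul_of_nonneg_right hx.1 (hf x)
      have := mul_pos (Real.exp_pos (-c)) hmμpos
      linarith
    -- the auxiliary functions
    set Gν : α → ℝ := fun x => f x * Real.log (f x / mν) - f x + mν with hGν
    set Gμ : α → ℝ := fun x => f x * Real.log (f x / mμ) - f x + mμ with hGμ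
    have hGν_nonneg : ∀ x, 0 ≤ Gν x := fun x => phi_nonneg (hf x) hmνpos
    have hGμ_nonneg : ∀ x, 0 ≤ Gμ x := fun x => phi_nonneg (hf x) hmμpos
    have hauxμν := ent_aux μ f hf hfμ hμint mν hmνpos hmμpos
    have hauxμμ := ent_aux μ f hf hfμ hμint mμ hmμpos hmμpos
    have hauxνν := ent_aux ν f hf hfν hνint mν hmνpos hmνpos
    have hauxνμ := ent_aux ν f hf hfν hνint mμ hmμpos hmνpos
    have hGν_int_ν : Integrable Gν ν := hauxνν.1
    have hGν_int_μ : Integrable Gν μ := hauxμν.1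
    have hGμ_int_ν : Integrable Gμ ν := hauxνμ.1
    have hGμ_int_μ : Integrable Gμ μ := hauxμμ.1
    have hDGν_int : Integrable (fun x => D x • Gν x) μ :=
      (integrable_rnDeriv_smul_iff hac).mpr hGν_int_ν
    have hDGμ_int : Integrable (fun x => D x • Gμ x) μ :=
      (integrable_rnDeriv_smul_iff hac).mpr hGμ_int_ν
    have hintGν_ν : ∫ x, Gν x ∂ν = Ent ν f := by
      have := hauxνν.2
      rw [← hmν] at this
      simp only [div_self hmνpos.ne', Real.log_one, mul_zero, zero_sub] at this
      rw [hGν]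
      rw [this]; ring
    have hintGμ_μ : ∫ x, Gμ x ∂μ = Ent μ f := by
      have := hauxμμ.2
      rw [← hmμ] at this
      simp only [div_self hmμpos.ne', Real.log_one, mul_zero, zero_sub] at this
      rw [hGμ]
      rw [this]; ring
    have hEntμ_le : Ent μ f ≤ ∫ x, Gν x ∂μ := by
      rw [hauxμν.2]
      have := phi_nonneg hmμ0 hmνpos
      linarith
    have hEntν_le : Ent ν f ≤ ∫ x, Gμ x ∂ν := by
      rw [hauxνμ.2]
      have h0 : 0 ≤ mν := hmνpos.le
      have := phi_nonneg h0 hmμpos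
      linarith
    have hνμ_Gν : ∫ x, Gν x ∂ν = ∫ x, D x • Gν x ∂μ :=
      (integral_rnDeriv_smul hac).symm
    have hνμ_Gμ : ∫ x, Gμ x ∂ν = ∫ x, D x • Gμ x ∂μ :=
      (integral_rnDeriv_smul hac).symm
    constructor
    · -- lower bound
      have h1 : ∫ x, Gμ x ∂ν ≤ Real.exp c * ∫ x, Gμ x ∂μ := by
        rw [hνμ_Gμ, ← integral_const_mul _ _]
        refine integral_mono_ae hDGμ_int (hGμ_int_μ.const_mul _) ?_
        filter_upwards [hd] with x hx
        simp only [smul_eq_mul]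
        exact mul_le_mul_of_nonneg_right hx.2 (hGμ_nonneg x)
      have h2 : Ent ν f ≤ Real.exp c * Ent μ f := by
        rw [← hintGμ_μ]
        exact hEntν_le.trans h1
      have h3 := mul_le_mul_of_nonneg_left h2 (Real.exp_pos (-c)).le
      rwa [← mul_assoc, ← Real.exp_add, neg_add_cancel, Real.exp_zero, one_mul] at h3
    · -- upper bound
      have h1 : ∫ x, Gν x ∂μ ≤ Real.exp c * ∫ x, Gν x ∂ν := by
        rw [hνμ_Gν, ← integral_const_mul _ _]
        refine integral_mono_ae hGν_int_μ (hDGν_int.const_mul _) ?_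
        filter_upwards [hd] with x hx
        simp only [smul_eq_mul]
        calc Gν x = 1 * Gν x := (one_mul _).symm
          _ ≤ (Real.exp c * D x) * Gν x := by
              refine mul_le_mul_of_nonneg_right ?_ (hGν_nonneg x)
              calc (1:ℝ) = Real.exp c * Real.exp (-c) := by
                    rw [← Real.exp_add, add_neg_cancel, Real.exp_zero]
                _ ≤ Real.exp c * D x := by
                    exact mul_le_mul_of_nonneg_left hx.1 (Real.exp_pos c).le
          _ = Real.exp c * (D x * Gν x) := by ring
      calc Ent μ f ≤ ∫ x, Gν x ∂μ := hEntμ_le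
        _ ≤ Real.exp c * ∫ x, Gν x ∂ν := h1
        _ = Real.exp c * Ent ν f := by rw [hintGν_ν]
end
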